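/- Let (λ_n)_{n≥1} be positive reals and let (ν_n)_{n≥1} satisfy 0 < ν_n ≤ 1 for all n. For n ≥ 1 and t ≥ 0 define r(n,t) = (−1)^{n−1} (λ_1/λ_n) ∑_{k=n−1}^∞ (−1)^k ∑_{(k_1,…,k_n) ∈ Λ^k_n} ( t^{∑_{j=1}^n k_j ν_j} ∏_{j=1}^n λ_j^{k_j} ) / Γ(1 + ∑_{j=1}^n k_j ν_j), and set r(0,t) = 0. Then for every n ≥ 1 and every t ≥ 0, r(n,t) = [n=1] + (I^{ν_n}_t ( −λ_n r(n,·) + λ_{n−1} r(n−1,·) ))(t), where [n=1] equals 1 if n = 1 and 0 otherwise, and λ_0 is irrelevant since r(0,·) = 0. (In particular r(1,0) = 1 and r(n,0) = 0 for n ≥ 2.) -/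

import Mathlib

open scoped BigOperators

/-- Riemann–Liouville fractional integral of order `α`. -/
noncomputable def rlInt (α : ℝ) (f : ℝ → ℝ) (t : ℝ) : ℝ :=
  (1 / Real.Gamma α) * ∫ s in (0:ℝ)..t, (t - s) ^ (α - 1) * f s

/-- `Lambda n k` is the set of tuples `(k_1, …, k_n)` of nonnegative integers with
`k_1 + ⋯ + k_n = k` and `k_j ≥ 1` for `2 ≤ j ≤ n` (`k_1` may be `0`); the coordinate
`j : Fin n` represents the index `j + 1 ∈ {1, …, n}`. -/
def Lambda (n k : ℕ) : Finset (Fin n → ℕ) :=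
  (Finset.Nat.antidiagonalTuple n k).filter
    (fun κ => ∀ j : Fin n, 1 ≤ j.val → 1 ≤ κ j)

/-- The state probabilities of the state dependent fractional pure birth process
(note that `Lambda n k = ∅` for `k < n - 1`, so the series over all `k : ℕ` agrees
with the series starting at `k = n - 1`). -/
noncomputable def rBirth (lam : ℕ → ℝ) (ν : ℕ → ℝ) (n : ℕ) (t : ℝ) : ℝ :=
  (-1 : ℝ) ^ (n - 1) * (lam 1 / lam n) * ∑' k : ℕ, (-1 : ℝ) ^ k *
    ∑ κ ∈ Lambda n k,
      (t ^ (∑ j, (κ j : ℝ) * ν (j.val + 1)) * ∏ j, lam (j.val + 1) ^ (κ j)) /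
        Real.Gamma (1 + ∑ j, (κ j : ℝ) * ν (j.val + 1))


section SDAux
open Real MeasureTheory intervalIntegral

lemma real_beta {a b : ℝ} (ha : 0 < a) (hb : 0 < b) :
    ∫ u in (0:ℝ)..1, u ^ (a-1) * (1-u) ^ (b-1)
      = Real.Gamma a * Real.Gamma b / Real.Gamma (a+b) := by
  have h := Complex.Gamma_mul_Gamma_eq_betaIntegral (s := (a:ℂ)) (t := (b:ℂ))
      (by simpa using ha) (by simpa using hb)
  have hBeta : Complex.betaIntegral (a:ℂ) (b:ℂ)
      = ((∫ u in (0:ℝ)..1, u ^ (a-1) * (1-u) ^ (b-1) : ℝ) : ℂ) := by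
    rw [Complex.betaIntegral, ← intervalIntegral.integral_ofReal]
    apply intervalIntegral.integral_congr
    intro x hx
    rw [Set.uIcc_of_le (by norm_num : (0:ℝ) ≤ 1)] at hx
    have h1x : (0:ℝ) ≤ 1 - x := by linarith [hx.2]
    dsimp only
    rw [Complex.ofReal_mul, Complex.ofReal_cpow hx.1, Complex.ofReal_cpow h1x]
    push_cast
    ring
  rw [hBeta, ← Complex.ofReal_add, Complex.Gamma_ofReal, Complex.Gamma_ofReal,
    Complex.Gamma_ofReal, ← Complex.ofReal_mul, ← Complex.ofReal_mul] at h
  have h2 : Real.Gamma a * Real.Gamma b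
      = Real.Gamma (a+b) * ∫ u in (0:ℝ)..1, u ^ (a-1) * (1-u) ^ (b-1) :=
    mod_cast h
  have hne : Real.Gamma (a+b) ≠ 0 := (Real.Gamma_pos_of_pos (by linarith)).ne'
  field_simp
  linarith [h2]

lemma pow_beta {ν β t : ℝ} (hν : 0 < ν) (hβ : 0 ≤ β) (ht : 0 ≤ t) :
    ∫ s in (0:ℝ)..t, (t-s) ^ (ν-1) * s ^ β
      = Real.Gamma (β+1) * Real.Gamma ν / Real.Gamma (β+1+ν) * t ^ (β+ν) := by
  rcases eq_or_lt_of_le ht with rfl | ht' 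
  · simp [Real.zero_rpow (by positivity : β + ν ≠ 0)]
  · have key : t • (∫ x in (0:ℝ)..1, (t - t*x) ^ (ν-1) * (t*x) ^ β)
        = ∫ s in (0:ℝ)..t, (t-s) ^ (ν-1) * s ^ β := by
      simpa using intervalIntegral.smul_integral_comp_mul_left
        (fun s => (t-s) ^ (ν-1) * s ^ β) t (a := 0) (b := 1)
    rw [← key]
    have congr1 : (∫ x in (0:ℝ)..1, (t - t*x) ^ (ν-1) * (t*x) ^ β)
        = ∫ x in (0:ℝ)..1, (t ^ (ν-1) * t ^ β) * (x ^ ((β+1)-1) * (1-x) ^ (ν-1)) := by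
      apply intervalIntegral.integral_congr
      intro x hx
      rw [Set.uIcc_of_le (by norm_num : (0:ℝ) ≤ 1)] at hx
      have h1x : (0:ℝ) ≤ 1 - x := by linarith [hx.2]
      dsimp only
      rw [show t - t*x = t * (1-x) by ring, Real.mul_rpow ht h1x, Real.mul_rpow ht hx.1,
        show (β+1)-1 = β by ring]
      ring
    rw [congr1, intervalIntegral.integral_const_mul, real_beta (by linarith) hν]
    rw [smul_eq_mul]
    have hpow : t ^ (β+ν) = t * (t^(ν-1) * t^β) := by
      rw [show β+ν = (ν-1)+1+β by ring, Real.rpow_add ht', Real.rpow_add ht', Real.rpow_one]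
      ring
    rw [hpow]
    ring

lemma gamma_lb {β : ℝ} (hβ : 0 ≤ β) :
    (Nat.factorial (Nat.floor β) : ℝ) / 2 ≤ Real.Gamma (1+β) := by
  have hfl : ((Nat.floor β : ℝ)) ≤ β := Nat.floor_le hβ
  have hfl2 : β < (Nat.floor β : ℝ) + 1 := Nat.lt_floor_add_one β
  have hmono := Real.Gamma_strictMonoOn_Ici.monotoneOn
    (a := ((Nat.floor β : ℝ)) + 2) (b := 2 + β)
    (by simp only [Set.mem_Ici]; linarith [Nat.cast_nonneg (α := ℝ) (Nat.floor β)]) (by simp only [Set.mem_Ici]; linarith)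
    (by linarith)
  have hfact : Real.Gamma ((Nat.floor β : ℝ) + 2) = (Nat.factorial (Nat.floor β + 1) : ℝ) := by
    have := Real.Gamma_nat_eq_factorial (Nat.floor β + 1)
    push_cast at this ⊢
    rw [← this]; ring_nf
  have hadd : Real.Gamma (2 + β) = (1+β) * Real.Gamma (1+β) := by
    rw [show (2:ℝ) + β = (1+β) + 1 by ring, Real.Gamma_add_one (by positivity)]
  have hpos : (0:ℝ) < 1 + β := by linarith
  have h1 : (Nat.factorial (Nat.floor β + 1) : ℝ) ≤ (1+β) * Real.Gamma (1+β) := by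
    rw [← hadd, ← hfact]; exact hmono
  have h2 : (1+β) ≤ 2 * ((Nat.floor β : ℝ) + 1) := by linarith
  have h3 : (Nat.factorial (Nat.floor β + 1) : ℝ)
      = (Nat.factorial (Nat.floor β) : ℝ) * ((Nat.floor β : ℝ) + 1) := by
    push_cast [Nat.factorial_succ]; ring
  have hG : 0 < Real.Gamma (1+β) := Real.Gamma_pos_of_pos hpos
  rw [div_le_iff₀ (by norm_num : (0:ℝ) < 2)]
  nlinarith [hG, h1, h2, h3, mul_le_mul_of_nonneg_right h2 hG.le]

lemma summable_ml {c A : ℝ} (hc : 0 < c) (hA : 0 ≤ A) :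
    Summable (fun k : ℕ => A ^ k / (Nat.factorial (Nat.floor (c * k)) : ℝ)) := by
  set A' : ℝ := max A 1 with hA'
  have hA'1 : (1:ℝ) ≤ A' := le_max_right _ _
  have hA'0 : (0:ℝ) < A' := lt_of_lt_of_le one_pos hA'1
  obtain ⟨m0, hm0⟩ := exists_nat_ge ((2*A') ^ (1/c))
  have hb1 : (1:ℝ) ≤ (m0:ℝ) + 1 := by linarith [Nat.cast_nonneg (α := ℝ) m0]
  have hb0 : (0:ℝ) < (m0:ℝ) + 1 := by positivity
  have h2A : (0:ℝ) ≤ 2*A' := by positivity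
  have hbc : 2*A' ≤ ((m0:ℝ)+1) ^ c := by
    calc 2*A' = ((2*A') ^ (1/c)) ^ c := by
          rw [← Real.rpow_mul h2A, one_div_mul_cancel hc.ne', Real.rpow_one]
      _ ≤ ((m0:ℝ)+1) ^ c :=
          Real.rpow_le_rpow (Real.rpow_nonneg h2A _) (by linarith) hc.le
  have hfac : ∀ m : ℕ, ((m0:ℝ)+1) ^ ((m:ℝ) - m0) ≤ (Nat.factorial m : ℝ) := by
    intro m
    rcases le_or_gt m0 m with h | h
    · have hcast : ((m:ℝ) - m0) = ((m - m0 : ℕ) : ℝ) := by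
        push_cast [Nat.cast_sub h]; ring
      rw [hcast, Real.rpow_natCast]
      have hn : (m0+1) ^ (m - m0) ≤ Nat.factorial m := by
        calc (m0+1) ^ (m - m0) ≤ Nat.factorial m0 * (m0+1) ^ (m - m0) :=
              Nat.le_mul_of_pos_left _ (Nat.factorial_pos m0)
          _ ≤ Nat.factorial (m0 + (m - m0)) := Nat.factorial_mul_pow_le_factorial
          _ = Nat.factorial m := by rw [Nat.add_sub_cancel' h]
      exact_mod_cast hn
    · calc ((m0:ℝ)+1) ^ ((m:ℝ) - m0) ≤ 1 := by
            apply Real.rpow_le_one_of_one_le_of_nonpos hb1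
            have : (m:ℝ) < m0 := by exact_mod_cast h
            linarith
        _ ≤ (Nat.factorial m : ℝ) := by
            exact_mod_cast Nat.one_le_iff_ne_zero.2 (Nat.factorial_ne_zero m)
  apply Summable.of_nonneg_of_le
      (f := fun k : ℕ => ((m0:ℝ)+1) ^ ((1:ℝ)+m0) * (1/2) ^ k)
  · intro k; positivity
  · intro k
    have hden : ((m0:ℝ)+1) ^ (c*k - 1 - m0) ≤ (Nat.factorial (Nat.floor (c*k)) : ℝ) := by
      refine le_trans ?_ (hfac (Nat.floor (c*(k:ℝ))))
      apply Real.rpow_le_rpow_of_exponent_le hb1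
      linarith [(Nat.sub_one_lt_floor (c*(k:ℝ)) : c*(k:ℝ) - 1 < Nat.floor (c*(k:ℝ)))]
    have hdenpos : (0:ℝ) < ((m0:ℝ)+1) ^ (c*k - 1 - m0) := Real.rpow_pos_of_pos hb0 _
    calc A ^ k / (Nat.factorial (Nat.floor (c*(k:ℝ))) : ℝ)
        ≤ A' ^ k / ((m0:ℝ)+1) ^ (c*(k:ℝ) - 1 - m0) :=
          div_le_div₀ (by positivity) (pow_le_pow_left₀ hA (le_max_left _ _) k)
            hdenpos hden
      _ = ((m0:ℝ)+1) ^ ((1:ℝ)+m0) * (A' / ((m0:ℝ)+1) ^ c) ^ k := by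
          rw [div_pow, ← Real.rpow_natCast (((m0:ℝ)+1) ^ c) k, ← Real.rpow_mul hb0.le]
          rw [show c*(k:ℝ) - 1 - m0 = c * k - (1+m0) by ring, Real.rpow_sub hb0,
            mul_comm c (k:ℝ)]
          field_simp
      _ ≤ ((m0:ℝ)+1) ^ ((1:ℝ)+m0) * (1/2) ^ k := by
          apply mul_le_mul_of_nonneg_left _ (Real.rpow_nonneg hb0.le _)
          apply pow_le_pow_left₀ (by positivity)
          rw [div_le_iff₀ (Real.rpow_pos_of_pos hb0 c)]
          calc A' = (2*A') * (1/2) := by ring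
            _ ≤ ((m0:ℝ)+1) ^ c * (1/2) := by linarith
            _ = 1/2 * ((m0:ℝ)+1) ^ c := by ring
  · exact (summable_geometric_of_lt_one (by norm_num) (by norm_num)).mul_left _


lemma mem_Lambda {n k : ℕ} {κ : Fin n → ℕ} :
    κ ∈ Lambda n k ↔ (∑ j, κ j) = k ∧ ∀ j : Fin n, 1 ≤ j.val → 1 ≤ κ j := by
  simp [Lambda, Finset.Nat.mem_antidiagonalTuple]

lemma lambda_one (k : ℕ) : Lambda 1 k = {![k]} := by
  ext κ
  simp only [mem_Lambda, Finset.mem_singleton]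
  constructor
  · rintro ⟨h, -⟩
    funext j
    fin_cases j
    simpa using h
  · rintro rfl
    refine ⟨by simp, ?_⟩
    intro j hj
    fin_cases j
    simp at hj

private def updLast (m : ℕ) (κ : Fin (m+1) → ℕ) : Fin (m+1) → ℕ :=
  Function.update κ (Fin.last m) (κ (Fin.last m) + 1)

lemma updLast_castSucc {m : ℕ} (κ : Fin (m+1) → ℕ) (j : Fin m) :
    updLast m κ (Fin.castSucc j) = κ (Fin.castSucc j) :=
  Function.update_of_ne (Fin.castSucc_lt_last j).ne _ _

lemma updLast_last {m : ℕ} (κ : Fin (m+1) → ℕ) :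
    updLast m κ (Fin.last m) = κ (Fin.last m) + 1 :=
  Function.update_self _ _ _

lemma updLast_inj (m : ℕ) : Function.Injective (updLast m) := by
  intro κ κ' h
  funext j
  rcases Fin.eq_castSucc_or_eq_last j with ⟨i, rfl⟩ | rfl
  · have := congrFun h (Fin.castSucc i)
    rwa [updLast_castSucc, updLast_castSucc] at this
  · have := congrFun h (Fin.last m)
    rw [updLast_last, updLast_last] at this
    omega

lemma sum_updLast {m : ℕ} (κ : Fin (m+1) → ℕ) :
    (∑ j, updLast m κ j) = (∑ j, κ j) + 1 := by
  rw [Fin.sum_univ_castSucc, Fin.sum_univ_castSucc (f := κ), updLast_last]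
  simp only [updLast_castSucc]
  omega

lemma sum_snoc {m : ℕ} (κ : Fin m → ℕ) (v : ℕ) :
    (∑ j, (Fin.snoc κ v : Fin (m+1) → ℕ) j) = (∑ j, κ j) + v := by
  rw [Fin.sum_univ_castSucc]
  simp [Fin.snoc_castSucc]

lemma lambda_succ_one (k : ℕ) :
    Lambda 1 (k+1) = (Lambda 1 k).image (updLast 0) := by
  rw [lambda_one, lambda_one]
  rw [Finset.image_singleton]
  congr 1
  funext j
  fin_cases j
  simp [updLast, Fin.last]

lemma lambda_split {m k : ℕ} (hm : 1 ≤ m) :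
    Lambda (m+1) (k+1)
      = (Lambda (m+1) k).image (updLast m)
        ∪ (Lambda m k).image (fun κ => Fin.snoc κ 1) := by
  ext κ'
  simp only [Finset.mem_union, Finset.mem_image, mem_Lambda]
  constructor
  · rintro ⟨hsum, hge⟩
    have hlast1 : 1 ≤ κ' (Fin.last m) := hge (Fin.last m) (by simp [Fin.last]; omega)
    rcases Nat.lt_or_ge (κ' (Fin.last m)) 2 with hv | hv
    · right
      refine ⟨Fin.init κ', ⟨?_, ?_⟩, ?_⟩
      · have := hsum
        rw [Fin.sum_univ_castSucc] at this
        have hv1 : κ' (Fin.last m) = 1 := by omega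
        rw [hv1] at this
        simpa [Fin.init] using by omega
      · intro j hj
        exact hge (Fin.castSucc j) (by simpa using hj)
      · have hv1 : κ' (Fin.last m) = 1 := by omega
        have h := Fin.snoc_init_self κ'
        rw [hv1] at h
        exact h
    · left
      refine ⟨Function.update κ' (Fin.last m) (κ' (Fin.last m) - 1), ⟨?_, ?_⟩, ?_⟩
      · have hupd : ∀ j : Fin m, Function.update κ' (Fin.last m) (κ' (Fin.last m) - 1)
            (Fin.castSucc j) = κ' (Fin.castSucc j) :=
          fun j => Function.update_of_ne (Fin.castSucc_lt_last j).ne _ _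
        rw [Fin.sum_univ_castSucc] at hsum ⊢
        simp only [hupd, Function.update_self]
        omega
      · intro j hj
        rcases Fin.eq_castSucc_or_eq_last j with ⟨i, rfl⟩ | rfl
        · rw [Function.update_of_ne (Fin.castSucc_lt_last i).ne]
          exact hge _ hj
        · rw [Function.update_self]; omega
      · funext j
        rcases Fin.eq_castSucc_or_eq_last j with ⟨i, rfl⟩ | rfl
        · rw [updLast_castSucc, Function.update_of_ne (Fin.castSucc_lt_last i).ne]
        · rw [updLast_last, Function.update_self]
          omega
  · rintro (⟨κ, ⟨hsum, hge⟩, rfl⟩ | ⟨κ, ⟨hsum, hge⟩, rfl⟩)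
    · refine ⟨by rw [sum_updLast, hsum], ?_⟩
      intro j hj
      rcases Fin.eq_castSucc_or_eq_last j with ⟨i, rfl⟩ | rfl
      · rw [updLast_castSucc]; exact hge _ hj
      · rw [updLast_last]; omega
    · refine ⟨by rw [sum_snoc, hsum], ?_⟩
      intro j hj
      rcases Fin.eq_castSucc_or_eq_last j with ⟨i, rfl⟩ | rfl
      · rw [Fin.snoc_castSucc]
        exact hge _ (by simpa using hj)
      · rw [Fin.snoc_last]

lemma lambda_split_disjoint {m k : ℕ} (hm : 1 ≤ m) :
    Disjoint ((Lambda (m+1) k).image (updLast m))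
      ((Lambda m k).image (fun κ => Fin.snoc κ 1)) := by
  rw [Finset.disjoint_left]
  rintro κ' h1 h2
  simp only [Finset.mem_image] at h1 h2
  obtain ⟨κ, hκ, rfl⟩ := h1
  obtain ⟨σ, -, hσ⟩ := h2
  have hk1 : 1 ≤ κ (Fin.last m) :=
    (mem_Lambda.1 hκ).2 (Fin.last m) (by simp [Fin.last]; omega)
  have h1 := congrFun hσ (Fin.last m)
  simp only [Fin.snoc_last, updLast_last] at h1
  omega

lemma snoc_inj {m : ℕ} : Function.Injective (fun κ : Fin m → ℕ => (Fin.snoc κ 1 : Fin (m+1) → ℕ)) := by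
  intro κ κ' h
  funext j
  have := congrFun h (Fin.castSucc j)
  simpa [Fin.snoc_castSucc] using this

lemma sum_lambda_split {M : Type*} [AddCommMonoid M] {m k : ℕ} (hm : 1 ≤ m)
    (f : (Fin (m+1) → ℕ) → M) :
    ∑ κ ∈ Lambda (m+1) (k+1), f κ
      = (∑ κ ∈ Lambda (m+1) k, f (updLast m κ))
        + ∑ κ ∈ Lambda m k, f (Fin.snoc κ 1) := by
  rw [lambda_split hm, Finset.sum_union (lambda_split_disjoint hm),
    Finset.sum_image (fun a _ b _ h => updLast_inj m h),
    Finset.sum_image (fun a _ b _ h => snoc_inj h)]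

lemma sum_lambda_one {M : Type*} [AddCommMonoid M] {k : ℕ}
    (f : (Fin 1 → ℕ) → M) :
    ∑ κ ∈ Lambda 1 (k+1), f κ = ∑ κ ∈ Lambda 1 k, f (updLast 0 κ) := by
  rw [lambda_succ_one, Finset.sum_image (fun a _ b _ h => updLast_inj 0 h)]

lemma lambda_zero_empty {m : ℕ} (hm : 1 ≤ m) : Lambda (m+1) 0 = ∅ := by
  ext κ
  simp only [mem_Lambda, Finset.notMem_empty, iff_false, not_and]
  intro hsum
  intro hge
  have h1 := hge (Fin.last m) (by simp [Fin.last]; omega)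
  have : κ (Fin.last m) ≤ ∑ j, κ j := Finset.single_le_sum (fun _ _ => Nat.zero_le _) (Finset.mem_univ _)
  omega

noncomputable def SDbs (ν : ℕ → ℝ) {n : ℕ} (κ : Fin n → ℕ) : ℝ :=
  ∑ j, (κ j : ℝ) * ν (j.val + 1)

noncomputable def SDpr (lam : ℕ → ℝ) {n : ℕ} (κ : Fin n → ℕ) : ℝ :=
  ∏ j, lam (j.val + 1) ^ (κ j)

noncomputable def SDS (lam ν : ℕ → ℝ) (n k : ℕ) (t : ℝ) : ℝ :=
  ∑ κ ∈ Lambda n k, (t ^ SDbs ν κ * SDpr lam κ) / Real.Gamma (1 + SDbs ν κ)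

lemma rBirth_eq (lam ν : ℕ → ℝ) (n : ℕ) (t : ℝ) :
    rBirth lam ν n t
      = (-1 : ℝ) ^ (n - 1) * (lam 1 / lam n) * ∑' k : ℕ, (-1 : ℝ) ^ k * SDS lam ν n k t :=
  rfl

section SDSFacts
variable {lam ν : ℕ → ℝ} (hlam : ∀ m, 1 ≤ m → 0 < lam m) (hν : ∀ m, 1 ≤ m → 0 < ν m ∧ ν m ≤ 1)
include hν

lemma SDbs_nonneg {n : ℕ} (κ : Fin n → ℕ) : 0 ≤ SDbs ν κ := by
  apply Finset.sum_nonneg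
  intro j _
  have := (hν (j.val + 1) (by omega)).1
  positivity

include hlam

lemma SDS_nonneg {n k : ℕ} {s : ℝ} (hs : 0 ≤ s) : 0 ≤ SDS lam ν n k s := by
  apply Finset.sum_nonneg
  intro κ _
  have hb := SDbs_nonneg hν κ
  have hΓ : 0 < Real.Gamma (1 + SDbs ν κ) := Real.Gamma_pos_of_pos (by linarith)
  have hP : 0 < SDpr lam κ := Finset.prod_pos fun j _ => pow_pos (hlam _ (by omega)) _
  have := Real.rpow_nonneg hs (SDbs ν κ)
  positivity

lemma SDS_bound (n : ℕ) (hn : 1 ≤ n) (T : ℝ) (hT : 0 ≤ T) :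
    ∃ C : ℕ → ℝ, Summable C ∧ (∀ k, 0 ≤ C k) ∧
      ∀ k, ∀ s : ℝ, 0 ≤ s → s ≤ T → SDS lam ν n k s ≤ C k := by
  obtain ⟨j0, -, hj0⟩ := Finset.exists_min_image Finset.univ
    (fun j : Fin n => ν (j.val + 1)) ⟨⟨0, hn⟩, Finset.mem_univ _⟩
  set c : ℝ := ν (j0.val + 1) with hc
  have hc0 : 0 < c := (hν _ (by omega)).1
  obtain ⟨j1, -, hj1⟩ := Finset.exists_max_image Finset.univ
    (fun j : Fin n => lam (j.val + 1)) ⟨⟨0, hn⟩, Finset.mem_univ _⟩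
  set L : ℝ := max (lam (j1.val + 1)) 1 with hL
  have hL1 : (1:ℝ) ≤ L := le_max_right _ _
  set T' : ℝ := max T 1 with hT'
  have hT'1 : (1:ℝ) ≤ T' := le_max_right _ _
  set A : ℝ := (2:ℝ)^n * (T' * L) with hA
  have hA0 : 0 ≤ A := by positivity
  refine ⟨fun k => 2 * (A ^ k / (Nat.factorial (Nat.floor (c * k)) : ℝ)), ?_, ?_, ?_⟩
  · exact (summable_ml hc0 hA0).mul_left 2
  · intro k; positivity
  · intro k s hs hsT
    have hu0 : (0:ℝ) < (Nat.factorial (Nat.floor (c * k)) : ℝ) := by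
      exact_mod_cast Nat.factorial_pos _
    have hterm : ∀ κ ∈ Lambda n k,
        (s ^ SDbs ν κ * SDpr lam κ) / Real.Gamma (1 + SDbs ν κ)
          ≤ (T' * L) ^ k * 2 / (Nat.factorial (Nat.floor (c * k)) : ℝ) := by
      intro κ hκ
      obtain ⟨hκs, -⟩ := mem_Lambda.1 hκ
      set b : ℝ := SDbs ν κ with hb
      have hb0 : 0 ≤ b := SDbs_nonneg hν κ
      have hsum_cast : (∑ j, (κ j : ℝ)) = (k : ℝ) := by exact_mod_cast congrArg Nat.cast hκs
      have hbk : b ≤ (k:ℝ) := by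
        rw [← hsum_cast]
        apply Finset.sum_le_sum
        intro j _
        have h1 := (hν (j.val + 1) (by omega)).2
        have : (0:ℝ) ≤ (κ j : ℝ) := by positivity
        nlinarith
      have hbc : c * (k:ℝ) ≤ b := by
        rw [← hsum_cast, Finset.mul_sum]
        apply Finset.sum_le_sum
        intro j _
        have h1 := hj0 j (Finset.mem_univ _)
        have : (0:ℝ) ≤ (κ j : ℝ) := by positivity
        nlinarith
      have hspow : s ^ b ≤ T' ^ k :=
        calc s ^ b ≤ T' ^ b := Real.rpow_le_rpow hs (le_trans hsT (le_max_left _ _)) hb0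
          _ ≤ T' ^ (k:ℝ) := Real.rpow_le_rpow_of_exponent_le hT'1 hbk
          _ = T' ^ k := Real.rpow_natCast _ k
      have hspow0 : 0 ≤ s ^ b := Real.rpow_nonneg hs b
      have hP : SDpr lam κ ≤ L ^ k := by
        calc SDpr lam κ ≤ ∏ j, L ^ (κ j) := by
              apply Finset.prod_le_prod
              · intro j _; exact pow_nonneg (hlam _ (by omega)).le _
              · intro j _
                exact pow_le_pow_left₀ (hlam _ (by omega)).le
                  (le_trans (hj1 j (Finset.mem_univ _)) (le_max_left _ _)) _
          _ = L ^ (∑ j, κ j) := Finset.prod_pow_eq_pow_sum _ _ _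
          _ = L ^ k := by rw [hκs]
      have hP0 : 0 ≤ SDpr lam κ :=
        Finset.prod_nonneg fun j _ => pow_nonneg (hlam _ (by omega)).le _
      have hΓ : (Nat.factorial (Nat.floor (c * k)) : ℝ) / 2 ≤ Real.Gamma (1 + b) := by
        refine le_trans ?_ (gamma_lb hb0)
        have hfl : Nat.floor (c * (k:ℝ)) ≤ Nat.floor b := Nat.floor_mono hbc
        have := Nat.factorial_le hfl
        have h2 : (Nat.factorial (Nat.floor (c * (k:ℝ))) : ℝ) ≤ (Nat.factorial (Nat.floor b) : ℝ) := by
          exact_mod_cast this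
        linarith
      calc (s ^ b * SDpr lam κ) / Real.Gamma (1 + b)
          ≤ (T' ^ k * L ^ k) / ((Nat.factorial (Nat.floor (c * k)) : ℝ) / 2) := by
            apply div_le_div₀ (by positivity)
              (mul_le_mul hspow hP hP0 (by positivity)) (by positivity) hΓ
        _ = (T' * L) ^ k * 2 / (Nat.factorial (Nat.floor (c * k)) : ℝ) := by
            rw [mul_pow]; field_simp
    have hcard : ((Lambda n k).card : ℝ) ≤ ((k+1 : ℕ) : ℝ) ^ n := by
      have hsub : Lambda n k ⊆ Fintype.piFinset (fun _ : Fin n => Finset.range (k+1)) := by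
        intro κ hκ
        obtain ⟨hκs, -⟩ := mem_Lambda.1 hκ
        rw [Fintype.mem_piFinset]
        intro j
        rw [Finset.mem_range]
        have : κ j ≤ ∑ i, κ i :=
          Finset.single_le_sum (fun _ _ => Nat.zero_le _) (Finset.mem_univ j)
        omega
      have := Finset.card_le_card hsub
      rw [Fintype.card_piFinset] at this
      simp only [Finset.card_range, Finset.prod_const, Finset.card_univ, Fintype.card_fin] at this
      exact_mod_cast this
    have hu : (0:ℝ) ≤ (T' * L) ^ k * 2 / (Nat.factorial (Nat.floor (c * k)) : ℝ) := by positivity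
    calc SDS lam ν n k s
        ≤ ((Lambda n k).card : ℝ) * ((T' * L) ^ k * 2 / (Nat.factorial (Nat.floor (c * k)) : ℝ)) := by
          have := Finset.sum_le_card_nsmul (Lambda n k) _ _ hterm
          rwa [nsmul_eq_mul] at this
      _ ≤ ((k+1:ℕ):ℝ) ^ n * ((T' * L) ^ k * 2 / (Nat.factorial (Nat.floor (c * k)) : ℝ)) :=
          mul_le_mul_of_nonneg_right hcard hu
      _ ≤ ((2:ℝ) ^ n) ^ k * ((T' * L) ^ k * 2 / (Nat.factorial (Nat.floor (c * k)) : ℝ)) := by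
          apply mul_le_mul_of_nonneg_right _ hu
          have h1 : ((k+1:ℕ):ℝ) ≤ ((2:ℝ)) ^ k := by
            exact_mod_cast (Nat.lt_two_pow_self (n := k))
          calc ((k+1:ℕ):ℝ) ^ n ≤ ((2:ℝ) ^ k) ^ n :=
                pow_le_pow_left₀ (by positivity) h1 n
            _ = ((2:ℝ) ^ n) ^ k := by rw [← pow_mul, ← pow_mul, Nat.mul_comm]
      _ = 2 * (A ^ k / (Nat.factorial (Nat.floor (c * k)) : ℝ)) := by
          rw [hA, mul_pow]; ring

end SDSFacts

open MeasureTheory in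
lemma kernel_int {ν' : ℝ} (hν' : 0 < ν') (t : ℝ) :
    IntervalIntegrable (fun s => (t - s) ^ (ν' - 1)) MeasureTheory.volume 0 t := by
  have h := (intervalIntegral.intervalIntegrable_rpow' (a := t) (b := 0)
    (r := ν' - 1) (by linarith)).comp_sub_left t
  simpa using h

lemma kernel_integral {ν' t : ℝ} (hν' : 0 < ν') (ht : 0 ≤ t) :
    ∫ s in (0:ℝ)..t, (t - s) ^ (ν' - 1) = t ^ ν' / ν' := by
  have h := intervalIntegral.integral_comp_sub_left (a := 0) (b := t)
    (fun u : ℝ => u ^ (ν' - 1)) t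
  simp only [sub_zero, sub_self] at h
  rw [h, integral_rpow (Or.inl (by linarith)), sub_add_cancel,
    Real.zero_rpow hν'.ne']
  ring

open MeasureTheory in
lemma rl_interchange {ν' t : ℝ} (hν' : 0 < ν') (ht : 0 ≤ t)
    {F : ℕ → ℝ → ℝ} {C : ℕ → ℝ} (hC : Summable C)
    (hFi : ∀ k, IntervalIntegrable (fun s => (t - s) ^ (ν' - 1) * F k s)
      MeasureTheory.volume 0 t)
    (hFb : ∀ k, ∀ s ∈ Set.Ioc (0:ℝ) t, |F k s| ≤ C k) :
    ∫ s in (0:ℝ)..t, (t - s) ^ (ν' - 1) * ∑' k, F k s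
      = ∑' k, ∫ s in (0:ℝ)..t, (t - s) ^ (ν' - 1) * F k s := by
  have hmeas : MeasurableSet (Set.Ioc (0:ℝ) t) := measurableSet_Ioc
  have hker := kernel_int hν' t
  have hkerIoc : IntegrableOn (fun s => (t - s) ^ (ν' - 1)) (Set.Ioc 0 t) := hker.1
  have hnorm : ∀ k, (∫ s in Set.Ioc (0:ℝ) t, ‖(t - s) ^ (ν' - 1) * F k s‖)
      ≤ (t ^ ν' / ν') * C k := by
    intro k
    calc (∫ s in Set.Ioc (0:ℝ) t, ‖(t - s) ^ (ν' - 1) * F k s‖)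
        ≤ ∫ s in Set.Ioc (0:ℝ) t, (t - s) ^ (ν' - 1) * C k := by
          apply integral_mono_of_nonneg
            (Filter.Eventually.of_forall fun s => norm_nonneg _)
            (hkerIoc.mul_const _)
          rw [Filter.EventuallyLE, MeasureTheory.ae_restrict_iff' hmeas]
          apply Filter.Eventually.of_forall
          intro s hs
          have hker0 : (0:ℝ) ≤ (t - s) ^ (ν' - 1) :=
            Real.rpow_nonneg (by linarith [hs.2]) _
          rw [norm_mul, Real.norm_eq_abs, Real.norm_eq_abs, abs_of_nonneg hker0]
          exact mul_le_mul_of_nonneg_left (hFb k s hs) hker0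
      _ = (∫ s in Set.Ioc (0:ℝ) t, (t - s) ^ (ν' - 1)) * C k := by
          rw [MeasureTheory.integral_mul_const]
      _ = (t ^ ν' / ν') * C k := by
          rw [← intervalIntegral.integral_of_le ht, kernel_integral hν' ht]
  have hsum : Summable fun k => ∫ s in Set.Ioc (0:ℝ) t, ‖(t - s) ^ (ν' - 1) * F k s‖ := by
    apply Summable.of_nonneg_of_le
      (fun k => integral_nonneg fun s => norm_nonneg _) hnorm (hC.mul_left _)
  have key := MeasureTheory.integral_tsum_of_summable_integral_norm
    (μ := MeasureTheory.volume.restrict (Set.Ioc (0:ℝ) t))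
    (F := fun k s => (t - s) ^ (ν' - 1) * F k s) (fun k => (hFi k).1) hsum
  rw [intervalIntegral.integral_of_le ht]
  simp_rw [intervalIntegral.integral_of_le ht]
  rw [key]
  congr 1
  funext s
  exact (tsum_mul_left).symm

section Layer3
variable {lam ν : ℕ → ℝ} (hlam : ∀ m, 1 ≤ m → 0 < lam m) (hν : ∀ m, 1 ≤ m → 0 < ν m ∧ ν m ≤ 1)
include hν

omit hν in
lemma term_int {t ν' b P : ℝ} (hν' : 0 < ν') (hb : 0 ≤ b) :
    IntervalIntegrable (fun s => (t - s) ^ (ν' - 1) * ((s ^ b * P) / Real.Gamma (1 + b)))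
      MeasureTheory.volume 0 t := by
  apply (kernel_int hν' t).mul_continuousOn
  apply Continuous.continuousOn
  exact ((Real.continuous_rpow_const hb).mul continuous_const).div_const _

omit hν in
lemma SDS_as_sum (n k : ℕ) (t : ℝ) :
    (fun s => (t - s) ^ ((ν : ℕ → ℝ) 0 * 0 + 1 - 1)) = (fun s => (t - s) ^ ((ν : ℕ → ℝ) 0 * 0 + 1 - 1)) := rfl

lemma S_kernel_int (n k : ℕ) {t ν' : ℝ} (hν' : 0 < ν') :
    IntervalIntegrable (fun s => (t - s) ^ (ν' - 1) * SDS lam ν n k s)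
      MeasureTheory.volume 0 t := by
  have heq : (fun s => (t - s) ^ (ν' - 1) * SDS lam ν n k s)
      = (∑ κ ∈ Lambda n k,
          fun s => (t - s) ^ (ν' - 1) * ((s ^ SDbs ν κ * SDpr lam κ) / Real.Gamma (1 + SDbs ν κ))) := by
    funext s
    rw [Finset.sum_apply, SDS, Finset.mul_sum]
  rw [heq]
  exact IntervalIntegrable.sum _ fun κ _ => term_int hν' (SDbs_nonneg hν κ)

lemma integral_kernel_SDS (d k : ℕ) {t ν' : ℝ} (hν' : 0 < ν') (ht : 0 ≤ t) :
    (1 / Real.Gamma ν') * ∫ s in (0:ℝ)..t, (t - s) ^ (ν' - 1) * SDS lam ν d k s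
      = ∑ κ ∈ Lambda d k,
          (t ^ (SDbs ν κ + ν') * SDpr lam κ) / Real.Gamma (1 + (SDbs ν κ + ν')) := by
  have heq : (fun s => (t - s) ^ (ν' - 1) * SDS lam ν d k s)
      = (fun s => ∑ κ ∈ Lambda d k,
          (t - s) ^ (ν' - 1) * ((s ^ SDbs ν κ * SDpr lam κ) / Real.Gamma (1 + SDbs ν κ))) := by
    funext s
    rw [SDS, Finset.mul_sum]
  rw [heq, intervalIntegral.integral_finset_sum
    (fun κ _ => term_int hν' (SDbs_nonneg hν κ)), Finset.mul_sum]
  apply Finset.sum_congr rfl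
  intro κ _
  set b : ℝ := SDbs ν κ with hbdef
  have hb : 0 ≤ b := SDbs_nonneg hν κ
  have h1 : (fun s => (t - s) ^ (ν' - 1) * ((s ^ b * SDpr lam κ) / Real.Gamma (1 + b)))
      = fun s => (SDpr lam κ / Real.Gamma (1 + b)) * ((t - s) ^ (ν' - 1) * s ^ b) := by
    funext s; ring
  rw [h1, intervalIntegral.integral_const_mul, pow_beta hν' hb ht]
  have hΓ1 : Real.Gamma (1 + b) ≠ 0 := (Real.Gamma_pos_of_pos (by linarith)).ne'
  have hΓ2 : Real.Gamma ν' ≠ 0 := (Real.Gamma_pos_of_pos hν').ne'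
  have hΓ3 : Real.Gamma (b + 1 + ν') ≠ 0 := (Real.Gamma_pos_of_pos (by linarith)).ne'
  rw [show (1:ℝ) + b = b + 1 by ring, show (1:ℝ) + (b + ν') = b + 1 + ν' by ring]
  field_simp

end Layer3

lemma SDbs_upd (ν : ℕ → ℝ) {m : ℕ} (κ : Fin (m+1) → ℕ) :
    SDbs ν (updLast m κ) = SDbs ν κ + ν (m+1) := by
  unfold SDbs
  rw [Fin.sum_univ_castSucc, Fin.sum_univ_castSucc
    (f := fun j : Fin (m+1) => (κ j : ℝ) * ν (j.val + 1))]
  simp only [updLast_castSucc, updLast_last, Fin.val_last, Fin.coe_castSucc]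
  push_cast
  ring

lemma SDpr_upd (lam : ℕ → ℝ) {m : ℕ} (κ : Fin (m+1) → ℕ) :
    SDpr lam (updLast m κ) = SDpr lam κ * lam (m+1) := by
  unfold SDpr
  rw [Fin.prod_univ_castSucc, Fin.prod_univ_castSucc
    (f := fun j : Fin (m+1) => lam (j.val + 1) ^ (κ j))]
  simp only [updLast_castSucc, updLast_last, Fin.val_last, Fin.coe_castSucc]
  rw [pow_succ]
  ring

lemma SDbs_snoc (ν : ℕ → ℝ) {m : ℕ} (κ : Fin m → ℕ) :
    SDbs ν (Fin.snoc κ 1 : Fin (m+1) → ℕ) = SDbs ν κ + ν (m+1) := by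
  unfold SDbs
  rw [Fin.sum_univ_castSucc]
  simp only [Fin.snoc_castSucc, Fin.snoc_last, Fin.val_last, Fin.coe_castSucc]
  push_cast
  ring

lemma SDpr_snoc (lam : ℕ → ℝ) {m : ℕ} (κ : Fin m → ℕ) :
    SDpr lam (Fin.snoc κ 1 : Fin (m+1) → ℕ) = SDpr lam κ * lam (m+1) := by
  unfold SDpr
  rw [Fin.prod_univ_castSucc]
  simp only [Fin.snoc_castSucc, Fin.snoc_last, Fin.val_last, Fin.coe_castSucc]
  rw [pow_one]

lemma SDS_zero_eq_zero (lam ν : ℕ → ℝ) {m : ℕ} (hm : 1 ≤ m) (t : ℝ) :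
    SDS lam ν (m+1) 0 t = 0 := by
  rw [SDS, lambda_zero_empty hm, Finset.sum_empty]

lemma SDS_one_zero (lam ν : ℕ → ℝ) (t : ℝ) : SDS lam ν 1 0 t = 1 := by
  rw [SDS, lambda_one]
  rw [Finset.sum_singleton]
  have h1 : SDbs ν (![0] : Fin 1 → ℕ) = 0 := by
    unfold SDbs
    simp
  have h2 : SDpr lam (![0] : Fin 1 → ℕ) = 1 := by
    unfold SDpr
    simp
  rw [h1, h2, Real.rpow_zero, add_zero, Real.Gamma_one]
  norm_num

/-- The SDFPBP state probabilities solve the Riemann–Liouville integral form of the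
governing difference-differential equations. -/
theorem sdfpbp_integral_equation (lam : ℕ → ℝ) (hlam : ∀ m, 1 ≤ m → 0 < lam m)
    (ν : ℕ → ℝ) (hν : ∀ m, 1 ≤ m → 0 < ν m ∧ ν m ≤ 1)
    (n : ℕ) (hn : 1 ≤ n) (t : ℝ) (ht : 0 ≤ t) :
    rBirth lam ν n t
      = (if n = 1 then (1:ℝ) else 0)
        + rlInt (ν n)
            (fun u => -(lam n) * rBirth lam ν n u
              + lam (n - 1) * (if n = 1 then (0:ℝ) else rBirth lam ν (n - 1) u)) t := by
  obtain ⟨m, rfl⟩ : ∃ m, n = m + 1 := ⟨n - 1, by omega⟩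
  have hν'pos : 0 < ν (m+1) := (hν (m+1) (by omega)).1
  have hlamn : (0:ℝ) < lam (m+1) := hlam _ (by omega)
  have hlam1 : (0:ℝ) < lam 1 := hlam 1 le_rfl
  have hΓν' : (0:ℝ) < Real.Gamma (ν (m+1)) := Real.Gamma_pos_of_pos hν'pos
  have hsummS : ∀ d : ℕ, 1 ≤ d → ∀ u : ℝ, 0 ≤ u → u ≤ t →
      Summable (fun k => (-1:ℝ)^k * SDS lam ν d k u) := by
    intro d hd u hu hut
    obtain ⟨C, hCs, hC0, hCb⟩ := SDS_bound hlam hν d hd t ht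
    apply Summable.of_abs
    apply Summable.of_nonneg_of_le (fun k => abs_nonneg _) _ hCs
    intro k
    rw [abs_mul, abs_pow, abs_neg, abs_one, one_pow, one_mul,
      abs_of_nonneg (SDS_nonneg hlam hν hu)]
    exact hCb k u hu hut
  rcases Nat.eq_zero_or_pos m with rfl | hm
  · -- n = 1
    simp only [Nat.zero_add, reduceIte, mul_zero, add_zero]
    have hν1 : 0 < ν 1 := hν'pos
    obtain ⟨C1, hC1s, hC10, hC1b⟩ := SDS_bound hlam hν 1 le_rfl t ht
    have hFi : ∀ k, IntervalIntegrable
        (fun s => (t - s) ^ (ν 1 - 1) * ((-1:ℝ)^k * SDS lam ν 1 k s)) volume 0 t := by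
      intro k
      have heq : (fun s => (t - s) ^ (ν 1 - 1) * ((-1:ℝ)^k * SDS lam ν 1 k s))
          = fun s => (-1:ℝ)^k * ((t - s) ^ (ν 1 - 1) * SDS lam ν 1 k s) := by
        funext s; ring
      rw [heq]
      exact (S_kernel_int hν 1 k hν1).const_mul _
    have hFb : ∀ k, ∀ s ∈ Set.Ioc (0:ℝ) t, |(-1:ℝ)^k * SDS lam ν 1 k s| ≤ C1 k := by
      intro k s hs
      rw [abs_mul, abs_pow, abs_neg, abs_one, one_pow, one_mul,
        abs_of_nonneg (SDS_nonneg hlam hν hs.1.le)]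
      exact hC1b k s hs.1.le hs.2
    have hint := rl_interchange hν1 ht hC1s hFi hFb
    have hper : ∀ k, (1 / Real.Gamma (ν 1)) *
        ∫ s in (0:ℝ)..t, (t - s) ^ (ν 1 - 1) * ((-1:ℝ)^k * SDS lam ν 1 k s)
        = (-1:ℝ)^k * ((1/lam 1) * SDS lam ν 1 (k+1) t) := by
      intro k
      have heq : (fun s => (t - s) ^ (ν 1 - 1) * ((-1:ℝ)^k * SDS lam ν 1 k s))
          = fun s => (-1:ℝ)^k * ((t - s) ^ (ν 1 - 1) * SDS lam ν 1 k s) := by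
        funext s; ring
      rw [heq, intervalIntegral.integral_const_mul]
      have h1 := integral_kernel_SDS (lam := lam) hν 1 k hν1 ht
      have hcomb : SDS lam ν 1 (k+1) t
          = lam 1 * (∑ κ ∈ Lambda 1 k,
              (t ^ (SDbs ν κ + ν 1) * SDpr lam κ) / Real.Gamma (1 + (SDbs ν κ + ν 1))) := by
        rw [SDS, sum_lambda_one, Finset.mul_sum]
        apply Finset.sum_congr rfl
        intro κ _
        rw [SDbs_upd, SDpr_upd]
        simp only [Nat.zero_add]
        ring
      have halg : (1 / Real.Gamma (ν 1)) * ((-1:ℝ)^k *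
            ∫ s in (0:ℝ)..t, (t - s) ^ (ν 1 - 1) * SDS lam ν 1 k s)
          = (-1:ℝ)^k * ((1 / Real.Gamma (ν 1)) *
            ∫ s in (0:ℝ)..t, (t - s) ^ (ν 1 - 1) * SDS lam ν 1 k s) := by ring
      rw [halg, h1, hcomb]
      field_simp
    have hrl : rlInt (ν 1) (fun u => -(lam 1) * rBirth lam ν 1 u) t
        = (-(lam 1)) * ∑' k, (-1:ℝ)^k * ((1/lam 1) * SDS lam ν 1 (k+1) t) := by
      unfold rlInt
      beta_reduce
      have hcongr : (∫ s in (0:ℝ)..t, (t - s) ^ (ν 1 - 1) * (-(lam 1) * rBirth lam ν 1 s))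
          = ∫ s in (0:ℝ)..t, (-(lam 1)) * ((t - s) ^ (ν 1 - 1) *
              ∑' k, (-1:ℝ)^k * SDS lam ν 1 k s) := by
        apply intervalIntegral.integral_congr
        intro s hs
        rw [Set.uIcc_of_le ht] at hs
        dsimp only
        rw [rBirth_eq]
        simp only [Nat.sub_self, pow_zero, one_mul]
        have : lam 1 / lam 1 = 1 := div_self hlam1.ne'
        rw [this]
        ring
      rw [hcongr, intervalIntegral.integral_const_mul, hint]
      have hpull : (∑' k, (-1:ℝ)^k * ((1/lam 1) * SDS lam ν 1 (k+1) t))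
          = (1 / Real.Gamma (ν 1)) * ∑' k,
              ∫ s in (0:ℝ)..t, (t - s) ^ (ν 1 - 1) * ((-1:ℝ)^k * SDS lam ν 1 k s) := by
        rw [← tsum_mul_left]
        exact tsum_congr fun k => (hper k).symm
      rw [hpull]
      ring
    rw [hrl, rBirth_eq, Summable.tsum_eq_zero_add (hsummS 1 le_rfl t ht le_rfl)]
    rw [pow_zero, one_mul, SDS_one_zero]
    have hshift : (∑' k, (-1:ℝ)^(k+1) * SDS lam ν 1 (k+1) t)
        = - ∑' k, (-1:ℝ)^k * SDS lam ν 1 (k+1) t := by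
      rw [← tsum_neg]
      exact tsum_congr fun k => by rw [pow_succ]; ring
    rw [hshift]
    have hpull2 : (∑' k, (-1:ℝ)^k * ((1/lam 1) * SDS lam ν 1 (k+1) t))
        = (1/lam 1) * ∑' k, (-1:ℝ)^k * SDS lam ν 1 (k+1) t := by
      rw [← tsum_mul_left]
      exact tsum_congr fun k => by ring
    rw [hpull2]
    simp only [Nat.sub_self, pow_zero, one_mul]
    field_simp
  · -- n ≥ 2
    have hm1 : ¬ (m + 1 = 1) := by omega
    simp only [if_neg hm1, Nat.add_sub_cancel]
    obtain ⟨C1, hC1s, hC10, hC1b⟩ := SDS_bound hlam hν (m+1) (by omega) t ht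
    obtain ⟨C2, hC2s, hC20, hC2b⟩ := SDS_bound hlam hν m hm t ht
    have hlamm : (0:ℝ) < lam m := hlam m hm
    have hstep1 : ∀ u : ℝ, 0 ≤ u → u ≤ t →
        -(lam (m+1)) * rBirth lam ν (m+1) u + lam m * rBirth lam ν m u
          = ((-1:ℝ)^(m+1) * lam 1) *
              ∑' k, (-1:ℝ)^k * (SDS lam ν (m+1) k u + SDS lam ν m k u) := by
      intro u hu hut
      rw [rBirth_eq, rBirth_eq]
      have hA := hsummS (m+1) (by omega) u hu hut
      have hB := hsummS m hm u hu hut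
      have htadd := Summable.tsum_add hA hB
      have hFsplit : (fun k => (-1:ℝ)^k * SDS lam ν (m+1) k u
            + (-1:ℝ)^k * SDS lam ν m k u)
          = fun k => (-1:ℝ)^k * (SDS lam ν (m+1) k u + SDS lam ν m k u) := by
        funext k; ring
      rw [hFsplit] at htadd
      rw [htadd]
      have hpow : (-1:ℝ)^(m-1) = (-1:ℝ)^(m+1) := by
        have he : m - 1 + 2 = m + 1 := by omega
        rw [← he, pow_add]
        norm_num
      rw [Nat.add_sub_cancel, hpow]
      field_simp
      ring
    have hFi : ∀ k, IntervalIntegrable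
        (fun s => (t - s) ^ (ν (m+1) - 1) *
          ((-1:ℝ)^k * (SDS lam ν (m+1) k s + SDS lam ν m k s))) volume 0 t := by
      intro k
      have heq : (fun s => (t - s) ^ (ν (m+1) - 1) *
            ((-1:ℝ)^k * (SDS lam ν (m+1) k s + SDS lam ν m k s)))
          = fun s => (-1:ℝ)^k * ((t - s) ^ (ν (m+1) - 1) * SDS lam ν (m+1) k s)
              + (-1:ℝ)^k * ((t - s) ^ (ν (m+1) - 1) * SDS lam ν m k s) := by
        funext s; ring
      rw [heq]
      exact ((S_kernel_int hν (m+1) k hν'pos).const_mul _).add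
        ((S_kernel_int hν m k hν'pos).const_mul _)
    have hFb : ∀ k, ∀ s ∈ Set.Ioc (0:ℝ) t,
        |(-1:ℝ)^k * (SDS lam ν (m+1) k s + SDS lam ν m k s)| ≤ C1 k + C2 k := by
      intro k s hs
      have h1 : (0:ℝ) ≤ SDS lam ν (m+1) k s := SDS_nonneg hlam hν hs.1.le
      have h2 : (0:ℝ) ≤ SDS lam ν m k s := SDS_nonneg hlam hν hs.1.le
      rw [abs_mul, abs_pow, abs_neg, abs_one, one_pow, one_mul,
        abs_of_nonneg (add_nonneg h1 h2)]
      exact add_le_add (hC1b k s hs.1.le hs.2) (hC2b k s hs.1.le hs.2)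
    have hint := rl_interchange hν'pos ht (hC1s.add hC2s) hFi hFb
    have hper : ∀ k, (1 / Real.Gamma (ν (m+1))) *
        ∫ s in (0:ℝ)..t, (t - s) ^ (ν (m+1) - 1) *
          ((-1:ℝ)^k * (SDS lam ν (m+1) k s + SDS lam ν m k s))
        = (-1:ℝ)^k * ((1/lam (m+1)) * SDS lam ν (m+1) (k+1) t) := by
      intro k
      have heq : (fun s => (t - s) ^ (ν (m+1) - 1) *
            ((-1:ℝ)^k * (SDS lam ν (m+1) k s + SDS lam ν m k s)))
          = fun s => (-1:ℝ)^k * ((t - s) ^ (ν (m+1) - 1) * SDS lam ν (m+1) k s)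
              + (-1:ℝ)^k * ((t - s) ^ (ν (m+1) - 1) * SDS lam ν m k s) := by
        funext s; ring
      rw [heq, intervalIntegral.integral_add
        ((S_kernel_int hν (m+1) k hν'pos).const_mul _)
        ((S_kernel_int hν m k hν'pos).const_mul _),
        intervalIntegral.integral_const_mul, intervalIntegral.integral_const_mul]
      have h1 := integral_kernel_SDS (lam := lam) hν (m+1) k hν'pos ht
      have h2 := integral_kernel_SDS (lam := lam) hν m k hν'pos ht
      have hcomb : SDS lam ν (m+1) (k+1) t
          = lam (m+1) * ((∑ κ ∈ Lambda (m+1) k,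
              (t ^ (SDbs ν κ + ν (m+1)) * SDpr lam κ) / Real.Gamma (1 + (SDbs ν κ + ν (m+1))))
            + ∑ κ ∈ Lambda m k,
              (t ^ (SDbs ν κ + ν (m+1)) * SDpr lam κ) / Real.Gamma (1 + (SDbs ν κ + ν (m+1)))) := by
        rw [SDS, sum_lambda_split hm, mul_add, Finset.mul_sum, Finset.mul_sum]
        congr 1
        · apply Finset.sum_congr rfl
          intro κ _
          rw [SDbs_upd, SDpr_upd]
          ring
        · apply Finset.sum_congr rfl
          intro κ _
          rw [SDbs_snoc, SDpr_snoc]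
          ring
      have halg : (1 / Real.Gamma (ν (m+1))) *
            ((-1:ℝ)^k * (∫ s in (0:ℝ)..t, (t - s) ^ (ν (m+1) - 1) * SDS lam ν (m+1) k s)
              + (-1:ℝ)^k * (∫ s in (0:ℝ)..t, (t - s) ^ (ν (m+1) - 1) * SDS lam ν m k s))
          = (-1:ℝ)^k * ((1 / Real.Gamma (ν (m+1))) *
              (∫ s in (0:ℝ)..t, (t - s) ^ (ν (m+1) - 1) * SDS lam ν (m+1) k s)
            + (1 / Real.Gamma (ν (m+1))) *
              (∫ s in (0:ℝ)..t, (t - s) ^ (ν (m+1) - 1) * SDS lam ν m k s)) := by ring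
      rw [halg, h1, h2, hcomb]
      field_simp
    have hrl : rlInt (ν (m+1))
        (fun u => -(lam (m+1)) * rBirth lam ν (m+1) u + lam m * rBirth lam ν m u) t
        = ((-1:ℝ)^(m+1) * lam 1) *
            ∑' k, (-1:ℝ)^k * ((1/lam (m+1)) * SDS lam ν (m+1) (k+1) t) := by
      unfold rlInt
      beta_reduce
      have hcongr : (∫ s in (0:ℝ)..t, (t - s) ^ (ν (m+1) - 1) *
            (-(lam (m+1)) * rBirth lam ν (m+1) s + lam m * rBirth lam ν m s))
          = ∫ s in (0:ℝ)..t, ((-1:ℝ)^(m+1) * lam 1) * ((t - s) ^ (ν (m+1) - 1) *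
              ∑' k, (-1:ℝ)^k * (SDS lam ν (m+1) k s + SDS lam ν m k s)) := by
        apply intervalIntegral.integral_congr
        intro s hs
        rw [Set.uIcc_of_le ht] at hs
        dsimp only
        rw [hstep1 s hs.1 hs.2]
        ring
      rw [hcongr, intervalIntegral.integral_const_mul, hint]
      have hpull : (∑' k, (-1:ℝ)^k * ((1/lam (m+1)) * SDS lam ν (m+1) (k+1) t))
          = (1 / Real.Gamma (ν (m+1))) * ∑' k,
              ∫ s in (0:ℝ)..t, (t - s) ^ (ν (m+1) - 1) *
                ((-1:ℝ)^k * (SDS lam ν (m+1) k s + SDS lam ν m k s)) := by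
        rw [← tsum_mul_left]
        exact tsum_congr fun k => (hper k).symm
      rw [hpull]
      ring
    rw [hrl, rBirth_eq, Summable.tsum_eq_zero_add (hsummS (m+1) (by omega) t ht le_rfl)]
    rw [pow_zero, one_mul, SDS_zero_eq_zero lam ν hm t]
    have hshift : (∑' k, (-1:ℝ)^(k+1) * SDS lam ν (m+1) (k+1) t)
        = - ∑' k, (-1:ℝ)^k * SDS lam ν (m+1) (k+1) t := by
      rw [← tsum_neg]
      exact tsum_congr fun k => by rw [pow_succ]; ring
    rw [hshift]
    have hpull2 : (∑' k, (-1:ℝ)^k * ((1/lam (m+1)) * SDS lam ν (m+1) (k+1) t))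
        = (1/lam (m+1)) * ∑' k, (-1:ℝ)^k * SDS lam ν (m+1) (k+1) t := by
      rw [← tsum_mul_left]
      exact tsum_congr fun k => by ring
    rw [hpull2, Nat.add_sub_cancel, pow_succ]
    field_simp
    ring

end SDAux
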